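/- Let G be a graph and X a homogeneous set in G. If G contains an odd hole, then at least one of the following graphs contains an odd hole: the graph G1(X) obtained from G by deleting all but one vertex of X, or the induced subgraph G2(X) = G[X]. -/

import Mathlib

open SimpleGraph
open Fin.NatCast Fin.CommRing

/-- The bull: a triangle 0,1,2 with pendant edges 0–3 and 1–4. -/
def bull : SimpleGraph (Fin 5) :=
  SimpleGraph.fromRel (fun a b =>
    (a, b) ∈ [((0 : Fin 5), (1 : Fin 5)), (0, 2), (1, 2), (0, 3), (1, 4)])

/-- `G` has an induced copy of `H`. -/
def Contains {V W : Type*} (G : SimpleGraph V) (H : SimpleGraph W) : Prop :=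
  Nonempty (H ↪g G)

/-- `G` has an odd hole: an induced cycle of odd length at least 5. -/
def HasOddHole {V : Type*} (G : SimpleGraph V) : Prop :=
  ∃ n, 5 ≤ n ∧ Odd n ∧ Nonempty (SimpleGraph.cycleGraph n ↪g G)

/-- `e` exhibits a shortest odd hole in `G`. -/
def IsShortestOddHole {V : Type*} (G : SimpleGraph V) {k : ℕ}
    (_e : SimpleGraph.cycleGraph k ↪g G) : Prop :=
  5 ≤ k ∧ Odd k ∧ ∀ m, 5 ≤ m → Odd m → Nonempty (SimpleGraph.cycleGraph m ↪g G) → k ≤ m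

/-- The hole given by `e` is clean: the neighbours on the hole of any vertex off the hole
are contained in a two-edge path `i-1, i, i+1` of the hole. -/
def CleanHole {V : Type*} (G : SimpleGraph V) {k : ℕ}
    (e : SimpleGraph.cycleGraph k ↪g G) : Prop :=
  ∀ v : V, (∀ j, e j ≠ v) →
    ∃ i : Fin k, ∀ j, G.Adj v (e j) → j = i ∨ (SimpleGraph.cycleGraph k).Adj i j

/-- `G` is pure: it has no odd hole, or some shortest odd hole of `G` is clean. -/
def IsPure {V : Type*} (G : SimpleGraph V) : Prop :=
  ¬ HasOddHole G ∨
    ∃ (k : ℕ) (e : SimpleGraph.cycleGraph k ↪g G), IsShortestOddHole G e ∧ CleanHole G e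

/-- `p`, `c`, `a` form an anchor in `G`: `p` is an induced 4-vertex path, `c` is complete
to it, and `a` is anticomplete to it. -/
def IsAnchorIn {V : Type*} (G : SimpleGraph V) (p : Fin 4 → V) (c a : V) : Prop :=
  Function.Injective p ∧ (∀ i, c ≠ p i) ∧ (∀ i, a ≠ p i) ∧ a ≠ c ∧
  (∀ i j : Fin 4, G.Adj (p i) (p j) ↔ ((i : ℕ) + 1 = j ∨ (j : ℕ) + 1 = i)) ∧
  (∀ i, G.Adj c (p i)) ∧ (∀ i, ¬ G.Adj a (p i))

/-- `G` contains an anchor. -/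
def ContainsAnchor {V : Type*} (G : SimpleGraph V) : Prop :=
  ∃ p c a, IsAnchorIn G p c a

/-- `X` is a homogeneous set of `G`. -/
def IsHomogeneousSet {V : Type*} [Fintype V] (G : SimpleGraph V) (X : Finset V) : Prop :=
  1 < X.card ∧ X.card < Fintype.card V ∧
    ∀ v ∉ X, (∀ x ∈ X, G.Adj v x) ∨ (∀ x ∈ X, ¬ G.Adj v x)

theorem stmt_7 {V : Type*} [Fintype V] (G : SimpleGraph V) (X : Finset V)
    (hX : IsHomogeneousSet G X) (x : V) (hx : x ∈ X)
    (hodd : HasOddHole G) :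
    HasOddHole (G.induce ((↑X : Set V)ᶜ ∪ {x})) ∨
      HasOddHole (G.induce (↑X : Set V)) := by
  obtain ⟨n, hn5, hnodd, ⟨e⟩⟩ := hodd
  haveI : NeZero n := ⟨by omega⟩
  have h1v : ((1 : Fin n)).val = 1 := by
    rw [← Nat.cast_one, Fin.val_cast_of_lt (by omega)]
  have hval1 : ∀ z : Fin n, z.val = 1 → z = 1 := by
    intro z hz
    exact Fin.val_injective (hz.trans h1v.symm)
  have hdvd : ∀ k : ℕ, ((k : ℕ) : Fin n) = 0 → n ∣ k := by
    intro k hk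
    exact (CharP.cast_eq_zero_iff (Fin n) n k).mp hk
  by_cases hall : ∀ i, e i ∈ X
  · right
    refine ⟨n, hn5, hnodd, ⟨⟨⟨fun i => ⟨e i, by simpa using hall i⟩, ?_⟩, ?_⟩⟩⟩
    · intro i j h
      exact e.injective (congrArg Subtype.val h)
    · intro a b
      exact e.map_rel_iff
  · left
    classical
    push_neg at hall
    obtain ⟨u, hu⟩ := hall
    -- key claim: at most one vertex of the hole is in X
    have key : ∀ a b : Fin n, e a ∈ X → e b ∈ X → a = b := by
      intro a b ha hb
      by_contra hab
      -- find a crossing edge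
      have hcross : ∃ i : Fin n, e i ∈ X ∧ e (i + 1) ∉ X := by
        by_contra h
        push_neg at h
        have h2 : ∀ t : ℕ, e (a + (t : Fin n)) ∈ X := by
          intro t
          induction t with
          | zero => simpa using ha
          | succ t ih =>
            have := h _ ih
            rw [show ((t + 1 : ℕ) : Fin n) = (t : Fin n) + 1 by push_cast; ring,
              ← add_assoc]
            exact this
        have := h2 (u - a).val
        rw [Fin.cast_val_eq_self, show a + (u - a) = u from by ring] at this
        exact hu this
      obtain ⟨i, hiX, hvX⟩ := hcross
      have hadj_vi : (cycleGraph n).Adj (i + 1) i := by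
        rw [cycleGraph_adj']
        left
        rw [show i + 1 - i = 1 from by ring, h1v]
      -- e (i+1) is complete to X
      have hcomp : ∀ y ∈ X, G.Adj (e (i + 1)) y := by
        rcases hX.2.2 (e (i + 1)) hvX with hc | hc
        · exact hc
        · exact absurd (e.map_rel_iff.mpr hadj_vi) (hc (e i) hiX)
      have hmem : ∀ c : Fin n, e c ∈ X → c = i ∨ c = i + 1 + 1 := by
        intro c hc
        have hadj : (cycleGraph n).Adj (i + 1) c := e.map_rel_iff.mp (hcomp (e c) hc)
        rw [cycleGraph_adj'] at hadj
        rcases hadj with h | h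
        · left
          have h' := hval1 _ h
          linear_combination -h'
        · right
          have h' := hval1 _ h
          linear_combination h'
      -- hence e (i+1+1) ∈ X
      have hb1 : e (i + 1 + 1) ∈ X := by
        rcases hmem a ha with h1 | h1 <;> rcases hmem b hb with h2 | h2
        · exact absurd (h1.trans h2.symm) hab
        · rw [← h2]; exact hb
        · rw [← h1]; exact ha
        · exact absurd (h1.trans h2.symm) hab
      -- the next vertex w = i+3 is not in X
      have hwX : e (i + 1 + 1 + 1) ∉ X := by
        intro hw
        rcases hmem _ hw with h | h
        · have h3 : ((3 : ℕ) : Fin n) = 0 := by push_cast; linear_combination h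
          have := Nat.le_of_dvd (by norm_num) (hdvd 3 h3)
          omega
        · have h3 : ((1 : ℕ) : Fin n) = 0 := by push_cast; linear_combination h
          have := Nat.le_of_dvd (by norm_num) (hdvd 1 h3)
          omega
      have hadj_wb : (cycleGraph n).Adj (i + 1 + 1 + 1) (i + 1 + 1) := by
        rw [cycleGraph_adj']
        left
        rw [show i + 1 + 1 + 1 - (i + 1 + 1) = 1 from by ring, h1v]
      have hcompw : ∀ y ∈ X, G.Adj (e (i + 1 + 1 + 1)) y := by
        rcases hX.2.2 (e (i + 1 + 1 + 1)) hwX with hc | hc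
        · exact hc
        · exact absurd (e.map_rel_iff.mpr hadj_wb) (hc (e (i + 1 + 1)) hb1)
      have hadj_wi : (cycleGraph n).Adj (i + 1 + 1 + 1) i :=
        e.map_rel_iff.mp (hcompw (e i) hiX)
      rw [cycleGraph_adj'] at hadj_wi
      rcases hadj_wi with h | h
      · have h' := hval1 _ h
        have h3 : ((2 : ℕ) : Fin n) = 0 := by push_cast; linear_combination h'
        have := Nat.le_of_dvd (by norm_num) (hdvd 2 h3)
        omega
      · have h' := hval1 _ h
        have h3 : ((4 : ℕ) : Fin n) = 0 := by push_cast; linear_combination -h'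
        have := Nat.le_of_dvd (by norm_num) (hdvd 4 h3)
        omega
    -- build the embedding into G.induce ((↑X)ᶜ ∪ {x})
    set s : Set V := (↑X : Set V)ᶜ ∪ {x} with hs
    have hfmem : ∀ j : Fin n, (if e j ∈ X then x else e j) ∈ s := by
      intro j
      by_cases h : e j ∈ X
      · rw [if_pos h]; exact Or.inr rfl
      · rw [if_neg h]; exact Or.inl (by simpa using h)
    let f : Fin n → ↥s := fun j => ⟨if e j ∈ X then x else e j, hfmem j⟩
    have hfval : ∀ j : Fin n, (f j : V) = if e j ∈ X then x else e j := fun j => rfl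
    have h1 : ∀ j₁ j₂ : Fin n, G.Adj (f j₁ : V) (f j₂ : V) ↔ G.Adj (e j₁) (e j₂) := by
      intro j₁ j₂
      rw [hfval, hfval]
      by_cases h₁ : e j₁ ∈ X <;> by_cases h₂ : e j₂ ∈ X
      · have := key _ _ h₁ h₂
        subst this
        rw [if_pos h₁]
        exact iff_of_false (G.irrefl) (G.irrefl)
      · rw [if_pos h₁, if_neg h₂]
        rcases hX.2.2 (e j₂) h₂ with hc | hc
        · exact iff_of_true (hc x hx).symm (hc _ h₁).symm
        · exact iff_of_false (fun h => hc x hx h.symm) (fun h => hc _ h₁ h.symm)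
      · rw [if_neg h₁, if_pos h₂]
        rcases hX.2.2 (e j₁) h₁ with hc | hc
        · exact iff_of_true (hc x hx) (hc _ h₂)
        · exact iff_of_false (fun h => hc x hx h) (fun h => hc _ h₂ h)
      · rw [if_neg h₁, if_neg h₂]
    refine ⟨n, hn5, hnodd, ⟨⟨⟨f, ?_⟩, ?_⟩⟩⟩
    · intro j₁ j₂ h
      have hval : (if e j₁ ∈ X then x else e j₁) = (if e j₂ ∈ X then x else e j₂) :=
        congrArg Subtype.val h
      by_cases h₁ : e j₁ ∈ X <;> by_cases h₂ : e j₂ ∈ X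
      · exact key _ _ h₁ h₂
      · rw [if_pos h₁, if_neg h₂] at hval
        exact absurd (hval ▸ hx) h₂
      · rw [if_neg h₁, if_pos h₂] at hval
        exact absurd (hval.symm ▸ hx) h₁
      · rw [if_neg h₁, if_neg h₂] at hval
        exact e.injective hval
    · intro a b
      exact (h1 a b).trans e.map_rel_iff
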